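/- arXiv:1904.10569 — 3 statements merged into one kernel-verified Lean document; each statement's English description precedes it below -/
import Mathlib

section
/- The polynomial p(x) = 13x^5 - 6x^4 - 2x^3 - 4x^2 - 3x + 2 has x = 1 as a root and all other roots lie strictly inside the open unit disk in ℂ. -/
open Polynomial

theorem stmt5 :
    (13 * (X : ℂ[X])^5 - 6 * X^4 - 2 * X^3 - 4 * X^2 - 3 * X + 2).eval 1 = 0 ∧
    ∀ z : ℂ, (13 * (X : ℂ[X])^5 - 6 * X^4 - 2 * X^3 - 4 * X^2 - 3 * X + 2).eval z = 0 →
      z ≠ 1 → ‖z‖ < 1 := by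
  constructor
  · norm_num
  · intro z hz hne
    simp only [eval_add, eval_sub, eval_mul, eval_pow, eval_ofNat, eval_X] at hz
    -- factor: p = (z-1) * q
    have hq : 13*z^4 + 7*z^3 + 5*z^2 + z - 2 = 0 := by
      have hfac : (z - 1) * (13*z^4 + 7*z^3 + 5*z^2 + z - 2) = 0 := by
        linear_combination hz
      rcases mul_eq_zero.mp hfac with h | h
      · exact absurd (sub_eq_zero.mp h) hne
      · exact h
    have key : (65:ℂ)*z^5 = -(22*z^4 + 18*z^3 + (-11)*z + 2) := by
      linear_combination (5*z - 1) * hq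
    by_contra hge
    push_neg at hge
    set r := ‖z‖ with hr
    have h1 : (1:ℝ) ≤ r := hge
    have hnorm : 65 * r^5 ≤ 22*r^4 + 18*r^3 + 11*r + 2 := by
      have e1 : 65 * r^5 = ‖(65:ℂ)*z^5‖ := by
        simp [norm_mul, norm_pow, hr]
      rw [e1, key, norm_neg]
      calc ‖(22:ℂ)*z^4 + 18*z^3 + (-11)*z + 2‖
          ≤ ‖(22:ℂ)*z^4 + 18*z^3 + (-11)*z‖ + ‖(2:ℂ)‖ := norm_add_le _ _
        _ ≤ ‖(22:ℂ)*z^4 + 18*z^3‖ + ‖(-11:ℂ)*z‖ + ‖(2:ℂ)‖ := by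
            gcongr; exact norm_add_le _ _
        _ ≤ ‖(22:ℂ)*z^4‖ + ‖(18:ℂ)*z^3‖ + ‖(-11:ℂ)*z‖ + ‖(2:ℂ)‖ := by
            gcongr; exact norm_add_le _ _
        _ ≤ 22*r^4 + 18*r^3 + 11*r + 2 := by
            simp [norm_mul, norm_pow, hr]
    nlinarith [pow_le_pow_right₀ h1 (by norm_num : 3 ≤ 4), sq_nonneg r, pow_pos (lt_of_lt_of_le zero_lt_one h1) 4, mul_le_mul_of_nonneg_left h1 (le_of_lt (pow_pos (lt_of_lt_of_le zero_lt_one h1) 4))]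
end

section
/- The normalized polynomial p(x) = x^4 + (1/8)x^3 - (3/4)x^2 - (5/8)x + 1/4 equals (1/8)(8x^4 + x^3 - 6x^2 - 5x + 2), has maximal-modulus root of modulus exactly 1 at x = 1, and its second largest root modulus is strictly less than 0.95. -/
open Polynomial

lemma stmt10_cubic (z : ℂ) (h : z^3 + (9/8)*z^2 + (3/8)*z - 1/4 = 0) : ‖z‖ < 0.95 := by
  have hre := congrArg Complex.re h
  have him := congrArg Complex.im h
  simp only [pow_succ, pow_zero, one_mul, Complex.mul_re, Complex.mul_im, Complex.add_re,
    Complex.add_im, Complex.sub_re, Complex.sub_im,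
    Complex.div_re, Complex.div_im, Complex.one_re, Complex.one_im, Complex.zero_re,
    Complex.zero_im, Complex.normSq] at hre him
  norm_num at hre him
  set x := z.re with hx
  set y := z.im with hy
  have key : x^2 + y^2 < 0.9025 := by
    rcases eq_or_ne y 0 with h0 | h0
    · rw [h0] at hre ⊢
      have hcub : x^3 + (9/8)*x^2 + (3/8)*x - 1/4 = 0 := by linear_combination hre
      have h1 : x < 0.95 := by nlinarith [sq_nonneg (x - 0.95), sq_nonneg (x + 1), sq_nonneg x]
      have h2 : -0.95 < x := by nlinarith [sq_nonneg (x + 0.95), sq_nonneg (x + 0.375), sq_nonneg x]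
      nlinarith
    · have hq : 3*x^2 - y^2 + (9/4)*x + 3/8 = 0 := by
        have : y * (3*x^2 - y^2 + (9/4)*x + 3/8) = 0 := by linear_combination him
        rcases mul_eq_zero.mp this with h' | h'
        · exact absurd h' h0
        · exact h'
      have hc : 512*x^3 + 576*x^2 + 210*x + 43 = 0 := by
        linear_combination (-64 : ℝ)*hre + (192*x + 72)*hq
      have hy2 : y^2 = 3*x^2 + (9/4)*x + 3/8 := by linarith
      rw [hy2]
      have hxu : x < -0.55 := by
        nlinarith [sq_nonneg (x + 0.2375 + 0.55), sq_nonneg (x + 0.1125 + 0.55), sq_nonneg (x + 0.55)]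
      have hxl : -0.7405 < x := by
        nlinarith [sq_nonneg (x + 0.7405), sq_nonneg (x + 0.44), sq_nonneg (x + 1)]
      nlinarith
  have hn : ‖z‖^2 = x^2 + y^2 := by
    rw [Complex.sq_norm]
    simp [Complex.normSq_apply, hx, hy, sq]
  nlinarith [norm_nonneg z]

lemma stmt10_eval (z : ℂ) :
    ((X : ℂ[X])^4 + C (1/8) * X^3 - C (3/4) * X^2 - C (5/8) * X + C (1/4)).eval z
    = (z - 1) * (z^3 + (9/8)*z^2 + (3/8)*z - 1/4) := by
  simp
  ring

theorem stmt10 :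
    ((X : ℂ[X])^4 + C (1/8) * X^3 - C (3/4) * X^2 - C (5/8) * X + C (1/4)) =
      C (1/8) * (8 * X^4 + X^3 - 6 * X^2 - 5 * X + 2) ∧
    ((X : ℂ[X])^4 + C (1/8) * X^3 - C (3/4) * X^2 - C (5/8) * X + C (1/4)).eval 1 = 0 ∧
    ‖(1 : ℂ)‖ = 1 ∧
    (∀ z : ℂ, ((X : ℂ[X])^4 + C (1/8) * X^3 - C (3/4) * X^2 - C (5/8) * X + C (1/4)).eval z = 0 →
      ‖z‖ ≤ 1) ∧
    (∀ z : ℂ, ((X : ℂ[X])^4 + C (1/8) * X^3 - C (3/4) * X^2 - C (5/8) * X + C (1/4)).eval z = 0 →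
      z ≠ 1 → ‖z‖ < 0.95) := by
  have key : ∀ z : ℂ,
      ((X : ℂ[X])^4 + C (1/8) * X^3 - C (3/4) * X^2 - C (5/8) * X + C (1/4)).eval z = 0 →
      z ≠ 1 → ‖z‖ < 0.95 := by
    intro z hz hz1
    rw [stmt10_eval] at hz
    rcases mul_eq_zero.mp hz with h' | h'
    · exact absurd (by linear_combination h' : z = 1) hz1
    · exact stmt10_cubic z h'
  refine ⟨?_, ?_, ?_, ?_, key⟩
  · have h8 : (8 : ℂ[X]) = C 8 := by simp [map_ofNat]
    have h6 : (6 : ℂ[X]) = C 6 := by simp [map_ofNat]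
    have h5 : (5 : ℂ[X]) = C 5 := by simp [map_ofNat]
    have h2 : (2 : ℂ[X]) = C 2 := by simp [map_ofNat]
    rw [h8, h6, h5, h2]
    ring_nf
    simp only [mul_assoc, ← C_mul]
    norm_num
  · rw [stmt10_eval]; ring
  · simp
  · intro z hz
    by_cases h1 : z = 1
    · simp [h1]
    · have := key z hz h1
      norm_num at this ⊢
      linarith
end

section
/- The polynomial p(x) = x^6 + (80/237)x^5 - (182/237)x^4 - (206/237)x^3 + (1/237)x^2 + (110/237)x - 40/237 has x = 1 as a root, all roots in the closed unit disk, and every root on the unit circle is simple. -/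
open Polynomial

set_option maxHeartbeats 4000000 in
lemma quintic_lt (z : ℂ)
    (hq : z^5 + ((317:ℂ)/237) * z^4 + ((135:ℂ)/237) * z^3 - ((71:ℂ)/237) * z^2 - ((70:ℂ)/237) * z + ((40:ℂ)/237) = 0) : ‖z‖ < 1 := by
  by_contra hcon
  push_neg at hcon
  set w := (starRingEnd ℂ) z with hwdef
  have hw : w^5 + ((317:ℂ)/237) * w^4 + ((135:ℂ)/237) * w^3 - ((71:ℂ)/237) * w^2 - ((70:ℂ)/237) * w + ((40:ℂ)/237) = 0 := by
    have h := congrArg (starRingEnd ℂ) hq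
    simpa [map_add, map_sub, map_mul, map_pow, map_div₀, map_ofNat] using h
  have key : (1 - w*z) * (((1344361738:ℂ)/549019863) * (((1:ℂ) + (-(8088008625:ℂ)/5377446952) * w + (-(133237375:ℂ)/10754893904) * w^2 + ((1631022650:ℂ)/672180869) * w^3 + ((29869293675:ℂ)/10754893904) * w^4) * ((1:ℂ) + (-(8088008625:ℂ)/5377446952) * z + (-(133237375:ℂ)/10754893904) * z^2 + ((1631022650:ℂ)/672180869) * z^3 + ((29869293675:ℂ)/10754893904) * z^4)) + ((511177901526007039:ℂ)/80335379289164832) * (((1:ℂ) * w + (-(263204590496020975:ℂ)/1022355803052014078) * w^2 + (-(431028042359239600:ℂ)/511177901526007039) * w^3 + (-(775574737235645925:ℂ)/1022355803052014078) * w^4) * ((1:ℂ) * z + (-(263204590496020975:ℂ)/1022355803052014078) * z^2 + (-(431028042359239600:ℂ)/511177901526007039) * z^3 + (-(775574737235645925:ℂ)/1022355803052014078) * z^4)) + ((401955504727599986241:ℂ)/50095434349548689822) * (((1:ℂ) * w^2 + (-(243992539895178194230:ℂ)/401955504727599986241) * w^3 + (-(123463819718135904320:ℂ)/133985168242533328747)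 * w^4) * ((1:ℂ) * z^2 + (-(243992539895178194230:ℂ)/401955504727599986241) * z^3 + (-(123463819718135904320:ℂ)/133985168242533328747) * z^4)) + ((219664289028997522861936:ℂ)/19695819731652399325809) * (((1:ℂ) * w^3 + ((210302156585669707318965:ℂ)/878657156115990091447744) * w^4) * ((1:ℂ) * z^3 + ((210302156585669707318965:ℂ)/878657156115990091447744) * z^4)) + ((73297516018539293125190775:ℂ)/3514628624463960365790976) * (((1:ℂ) * w^4) * ((1:ℂ) * z^4))) = 1 + w*z + (w*z)^2 + (w*z)^3 + (w*z)^4 := by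
    linear_combination (-(w * (((9956431225:ℂ)/1464052968) + (-(29389625425:ℂ)/1952070624) * w + (-(73029682045:ℂ)/11712423744) * w^2 + ((20298438935:ℂ)/732026484) * w^3 + ((198549145675:ℂ)/3904141248) * w^4)) + ((198549145675:ℂ)/3904141248) * (w^5 + ((317:ℂ)/237) * w^4 + ((135:ℂ)/237) * w^3 - ((71:ℂ)/237) * w^2 - ((70:ℂ)/237) * w + ((40:ℂ)/237))) * hq + (-(z * (((9956431225:ℂ)/1464052968) + (-(29389625425:ℂ)/1952070624) * z + (-(73029682045:ℂ)/11712423744) * z^2 + ((20298438935:ℂ)/732026484) * z^3 + ((198549145675:ℂ)/3904141248) * z^4))) * hw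
  have hG0 : ((1:ℂ) + (-(8088008625:ℂ)/5377446952) * w + (-(133237375:ℂ)/10754893904) * w^2 + ((1631022650:ℂ)/672180869) * w^3 + ((29869293675:ℂ)/10754893904) * w^4) = (starRingEnd ℂ) ((1:ℂ) + (-(8088008625:ℂ)/5377446952) * z + (-(133237375:ℂ)/10754893904) * z^2 + ((1631022650:ℂ)/672180869) * z^3 + ((29869293675:ℂ)/10754893904) * z^4) := by
    simp [hwdef, map_add, map_mul, map_pow, map_div₀, map_ofNat, map_one, map_neg]
  have hG1 : ((1:ℂ) * w + (-(263204590496020975:ℂ)/1022355803052014078) * w^2 + (-(431028042359239600:ℂ)/511177901526007039) * w^3 + (-(775574737235645925:ℂ)/1022355803052014078) * w^4) = (starRingEnd ℂ) ((1:ℂ) * z + (-(263204590496020975:ℂ)/1022355803052014078) * z^2 + (-(431028042359239600:ℂ)/511177901526007039) * z^3 + (-(775574737235645925:ℂ)/1022355803052014078) * z^4) := by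
    simp [hwdef, map_add, map_mul, map_pow, map_div₀, map_ofNat, map_one, map_neg]
  have hG2 : ((1:ℂ) * w^2 + (-(243992539895178194230:ℂ)/401955504727599986241) * w^3 + (-(123463819718135904320:ℂ)/133985168242533328747) * w^4) = (starRingEnd ℂ) ((1:ℂ) * z^2 + (-(243992539895178194230:ℂ)/401955504727599986241) * z^3 + (-(123463819718135904320:ℂ)/133985168242533328747) * z^4) := by
    simp [hwdef, map_add, map_mul, map_pow, map_div₀, map_ofNat, map_one, map_neg]
  have hG3 : ((1:ℂ) * w^3 + ((210302156585669707318965:ℂ)/878657156115990091447744) * w^4) = (starRingEnd ℂ) ((1:ℂ) * z^3 + ((210302156585669707318965:ℂ)/878657156115990091447744) * z^4) := by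
    simp [hwdef, map_add, map_mul, map_pow, map_div₀, map_ofNat, map_one, map_neg]
  have hG4 : ((1:ℂ) * w^4) = (starRingEnd ℂ) ((1:ℂ) * z^4) := by
    simp [hwdef, map_add, map_mul, map_pow, map_div₀, map_ofNat, map_one, map_neg]
  rw [hG0, hG1, hG2, hG3, hG4] at key
  have hmc : ∀ u : ℂ, (starRingEnd ℂ) u * u = ((Complex.normSq u : ℝ) : ℂ) := by
    intro u; rw [mul_comm, Complex.mul_conj]
  simp only [hwdef, hmc] at key
  set nn := Complex.normSq z with hnn
  set s0 := Complex.normSq ((1:ℂ) + (-(8088008625:ℂ)/5377446952) * z + (-(133237375:ℂ)/10754893904) * z^2 + ((1631022650:ℂ)/672180869) * z^3 + ((29869293675:ℂ)/10754893904) * z^4) with hs0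
  set s1 := Complex.normSq ((1:ℂ) * z + (-(263204590496020975:ℂ)/1022355803052014078) * z^2 + (-(431028042359239600:ℂ)/511177901526007039) * z^3 + (-(775574737235645925:ℂ)/1022355803052014078) * z^4) with hs1
  set s2 := Complex.normSq ((1:ℂ) * z^2 + (-(243992539895178194230:ℂ)/401955504727599986241) * z^3 + (-(123463819718135904320:ℂ)/133985168242533328747) * z^4) with hs2
  set s3 := Complex.normSq ((1:ℂ) * z^3 + ((210302156585669707318965:ℂ)/878657156115990091447744) * z^4) with hs3
  set s4 := Complex.normSq ((1:ℂ) * z^4) with hs4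
  have keyR : (1 - nn) * (((1344361738:ℝ)/549019863) * s0 + ((511177901526007039:ℝ)/80335379289164832) * s1 + ((401955504727599986241:ℝ)/50095434349548689822) * s2 + ((219664289028997522861936:ℝ)/19695819731652399325809) * s3 + ((73297516018539293125190775:ℝ)/3514628624463960365790976) * s4) = 1 + nn + nn^2 + nn^3 + nn^4 := by
    apply Complex.ofReal_injective
    push_cast
    linear_combination key
  have hn1 : (1:ℝ) ≤ nn := by
    have h : nn = ‖z‖^2 := by rw [hnn, Complex.normSq_eq_norm_sq]
    nlinarith [hcon]
  have hS : (0:ℝ) ≤ ((1344361738:ℝ)/549019863) * s0 + ((511177901526007039:ℝ)/80335379289164832) * s1 + ((401955504727599986241:ℝ)/50095434349548689822) * s2 + ((219664289028997522861936:ℝ)/19695819731652399325809) * s3 + ((73297516018539293125190775:ℝ)/3514628624463960365790976) * s4 := by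
    have h0 := Complex.normSq_nonneg ((1:ℂ) + (-(8088008625:ℂ)/5377446952) * z + (-(133237375:ℂ)/10754893904) * z^2 + ((1631022650:ℂ)/672180869) * z^3 + ((29869293675:ℂ)/10754893904) * z^4)
    have h1 := Complex.normSq_nonneg ((1:ℂ) * z + (-(263204590496020975:ℂ)/1022355803052014078) * z^2 + (-(431028042359239600:ℂ)/511177901526007039) * z^3 + (-(775574737235645925:ℂ)/1022355803052014078) * z^4)
    have h2 := Complex.normSq_nonneg ((1:ℂ) * z^2 + (-(243992539895178194230:ℂ)/401955504727599986241) * z^3 + (-(123463819718135904320:ℂ)/133985168242533328747) * z^4)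
    have h3 := Complex.normSq_nonneg ((1:ℂ) * z^3 + ((210302156585669707318965:ℂ)/878657156115990091447744) * z^4)
    have h4 := Complex.normSq_nonneg ((1:ℂ) * z^4)
    rw [← hs0] at h0; rw [← hs1] at h1; rw [← hs2] at h2; rw [← hs3] at h3; rw [← hs4] at h4
    positivity
  nlinarith [keyR, hS, hn1, mul_nonneg (sub_nonneg.mpr hn1) hS, sq_nonneg nn, pow_le_pow_left₀ (by linarith : (0:ℝ) ≤ 1) hn1 2]

theorem stmt11 :
    ((X : ℂ[X])^6 + C (80/237) * X^5 - C (182/237) * X^4 - C (206/237) * X^3 +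
        C (1/237) * X^2 + C (110/237) * X - C (40/237)).eval 1 = 0 ∧
    ∀ z : ℂ, ((X : ℂ[X])^6 + C (80/237) * X^5 - C (182/237) * X^4 - C (206/237) * X^3 +
        C (1/237) * X^2 + C (110/237) * X - C (40/237)).eval z = 0 →
      ‖z‖ ≤ 1 ∧ (‖z‖ = 1 →
        rootMultiplicity z ((X : ℂ[X])^6 + C (80/237) * X^5 - C (182/237) * X^4 -
          C (206/237) * X^3 + C (1/237) * X^2 + C (110/237) * X - C (40/237)) = 1) := by
  constructor
  · simp
    norm_num
  · intro z hz
    simp only [eval_add, eval_sub, eval_mul, eval_pow, eval_C, eval_X] at hz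
    have hsplit : (z - 1) * (z^5 + ((317:ℂ)/237) * z^4 + ((135:ℂ)/237) * z^3 - ((71:ℂ)/237) * z^2 - ((70:ℂ)/237) * z + ((40:ℂ)/237)) = 0 := by
      linear_combination hz
    rcases mul_eq_zero.mp hsplit with h1 | h2
    · have hz1 : z = 1 := sub_eq_zero.mp h1
      subst hz1
      refine ⟨by simp, fun _ => ?_⟩
      have c80 : (C ((80:ℂ)/237) : ℂ[X]) = 80 * C ((237:ℂ)⁻¹) := by
        rw [show (80:ℂ)/237 = 80 * (237:ℂ)⁻¹ from div_eq_mul_inv _ _, C_mul, map_ofNat]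
      have c182 : (C ((182:ℂ)/237) : ℂ[X]) = 182 * C ((237:ℂ)⁻¹) := by
        rw [show (182:ℂ)/237 = 182 * (237:ℂ)⁻¹ from div_eq_mul_inv _ _, C_mul, map_ofNat]
      have c206 : (C ((206:ℂ)/237) : ℂ[X]) = 206 * C ((237:ℂ)⁻¹) := by
        rw [show (206:ℂ)/237 = 206 * (237:ℂ)⁻¹ from div_eq_mul_inv _ _, C_mul, map_ofNat]
      have c1 : (C ((1:ℂ)/237) : ℂ[X]) = 1 * C ((237:ℂ)⁻¹) := by
        rw [show (1:ℂ)/237 = 1 * (237:ℂ)⁻¹ from div_eq_mul_inv _ _, C_mul, map_one]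
      have c110 : (C ((110:ℂ)/237) : ℂ[X]) = 110 * C ((237:ℂ)⁻¹) := by
        rw [show (110:ℂ)/237 = 110 * (237:ℂ)⁻¹ from div_eq_mul_inv _ _, C_mul, map_ofNat]
      have c40 : (C ((40:ℂ)/237) : ℂ[X]) = 40 * C ((237:ℂ)⁻¹) := by
        rw [show (40:ℂ)/237 = 40 * (237:ℂ)⁻¹ from div_eq_mul_inv _ _, C_mul, map_ofNat]
      have c317 : (C ((317:ℂ)/237) : ℂ[X]) = 317 * C ((237:ℂ)⁻¹) := by
        rw [show (317:ℂ)/237 = 317 * (237:ℂ)⁻¹ from div_eq_mul_inv _ _, C_mul, map_ofNat]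
      have c135 : (C ((135:ℂ)/237) : ℂ[X]) = 135 * C ((237:ℂ)⁻¹) := by
        rw [show (135:ℂ)/237 = 135 * (237:ℂ)⁻¹ from div_eq_mul_inv _ _, C_mul, map_ofNat]
      have c71 : (C ((71:ℂ)/237) : ℂ[X]) = 71 * C ((237:ℂ)⁻¹) := by
        rw [show (71:ℂ)/237 = 71 * (237:ℂ)⁻¹ from div_eq_mul_inv _ _, C_mul, map_ofNat]
      have c70 : (C ((70:ℂ)/237) : ℂ[X]) = 70 * C ((237:ℂ)⁻¹) := by
        rw [show (70:ℂ)/237 = 70 * (237:ℂ)⁻¹ from div_eq_mul_inv _ _, C_mul, map_ofNat]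
      have hu : ((237:ℂ[X])) * C ((237:ℂ)⁻¹) = 1 := by
        rw [show ((237:ℂ[X])) = C ((237:ℂ)) from (map_ofNat C 237).symm, ← C_mul]
        norm_num
      have hfac : ((X : ℂ[X])^6 + C (80/237) * X^5 - C (182/237) * X^4 - C (206/237) * X^3 +
          C (1/237) * X^2 + C (110/237) * X - C (40/237)) =
          (X - C 1) * ((X : ℂ[X])^5 + C (317/237) * X^4 + C (135/237) * X^3 -
            C (71/237) * X^2 - C (70/237) * X + C (40/237)) := by
        rw [c80, c182, c206, c1, c110, c40, c317, c135, c71, c70, map_one]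
        linear_combination (-(X:ℂ[X])^5) * hu
      have hQ1 : ((X : ℂ[X])^5 + C (317/237) * X^4 + C (135/237) * X^3 -
            C (71/237) * X^2 - C (70/237) * X + C (40/237)).eval 1 ≠ 0 := by
        simp only [eval_add, eval_sub, eval_mul, eval_pow, eval_C, eval_X, one_pow, mul_one]
        norm_num
      have hQne : ((X : ℂ[X])^5 + C (317/237) * X^4 + C (135/237) * X^3 -
            C (71/237) * X^2 - C (70/237) * X + C (40/237)) ≠ 0 := by
        intro h0
        exact hQ1 (by rw [h0]; simp)
      have hXne : ((X : ℂ[X]) - C 1) ≠ 0 := X_sub_C_ne_zero 1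
      rw [hfac, rootMultiplicity_mul (mul_ne_zero hXne hQne)]
      rw [rootMultiplicity_X_sub_C_self,
        rootMultiplicity_eq_zero (fun h => hQ1 h)]
    · have := quintic_lt z h2
      constructor
      · linarith
      · intro habs; linarith
end
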